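/- (Concentration of the rank of a sampled element.) Let n ≥ 3, let 0 < δ < ln n, let 0 < β < 1, and let z be a real with 1 ≤ z(1−β) and z(1+β) ≤ n. Set L = ln((ln n)/δ) and a = β²·z/(6L), and assume a ≥ 1. Let X₁,…,X_n be independent Bernoulli random variables each equal to 1 with probability 1/a. Let S_m = Σ_{j=1}^m X_j and let R = min{m ≤ n : S_m ≥ z/a} (with R = +∞ if S_n < z/a). Then with probability at least 1 − 4δ/ln n one has z(1−β) < R ≤ z(1+β); equivalently, with probability at least 1 − 4δ/ln n both S_{⌊z(1−β)⌋} < z/a and S_{⌈z(1+β)⌉} ≥ z/a hold. -/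

import Mathlib

open MeasureTheory ProbabilityTheory

lemma sum_bound {Ω : Type*} (X : ℕ → Ω → ℕ)
    (h01 : ∀ j, ∀ ω, X j ω = 0 ∨ X j ω = 1) (m : ℕ) (ω : Ω) :
    0 ≤ (∑ j ∈ Finset.Icc 1 m, (X j ω : ℝ)) ∧
      (∑ j ∈ Finset.Icc 1 m, (X j ω : ℝ)) ≤ m := by
  constructor
  · exact Finset.sum_nonneg fun j _ => by positivity
  · calc (∑ j ∈ Finset.Icc 1 m, (X j ω : ℝ)) ≤ ∑ j ∈ Finset.Icc 1 m, 1 := by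
          refine Finset.sum_le_sum fun j _ => ?_
          rcases h01 j ω with h | h <;> simp [h]
        _ = m := by simp [Nat.card_Icc]

lemma int_exp_sum {Ω : Type*} [MeasurableSpace Ω] (P : Measure Ω) [IsProbabilityMeasure P]
    (X : ℕ → Ω → ℕ) (hmeas : ∀ j, Measurable (X j))
    (h01 : ∀ j, ∀ ω, X j ω = 0 ∨ X j ω = 1) (m : ℕ) (t : ℝ) :
    Integrable (fun ω => Real.exp (t * ∑ j ∈ Finset.Icc 1 m, (X j ω : ℝ))) P := by
  have hSmeas : Measurable (fun ω => ∑ j ∈ Finset.Icc 1 m, (X j ω : ℝ)) :=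
    Finset.measurable_sum _ fun j _ => measurable_from_top.comp (hmeas j)
  refine Integrable.mono' (integrable_const (Real.exp (|t| * m)))
    ((hSmeas.const_mul t).exp.aestronglyMeasurable) (ae_of_all _ fun ω => ?_)
  rw [Real.norm_eq_abs, Real.abs_exp]
  apply Real.exp_le_exp.2
  obtain ⟨h0, hm⟩ := sum_bound X h01 m ω
  calc t * ∑ j ∈ Finset.Icc 1 m, (X j ω : ℝ) ≤ |t * ∑ j ∈ Finset.Icc 1 m, (X j ω : ℝ)| :=
        le_abs_self _
    _ = |t| * |∑ j ∈ Finset.Icc 1 m, (X j ω : ℝ)| := abs_mul _ _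
    _ ≤ |t| * m := by
        rw [abs_of_nonneg h0]
        exact mul_le_mul_of_nonneg_left hm (abs_nonneg t)

lemma mgf_bern_sum {Ω : Type*} [MeasurableSpace Ω] (P : Measure Ω) [IsProbabilityMeasure P]
    {a : ℝ} (ha0 : 0 < a)
    (X : ℕ → Ω → ℕ) (hmeas : ∀ j, Measurable (X j))
    (h01 : ∀ j, ∀ ω, X j ω = 0 ∨ X j ω = 1)
    (hBer : ∀ j, P {ω | X j ω = 1} = ENNReal.ofReal (1 / a))
    (hindep : iIndepFun X P)
    (m : ℕ) (t : ℝ) :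
    mgf (fun ω => ∑ j ∈ Finset.Icc 1 m, (X j ω : ℝ)) P t
      = (1 + (Real.exp t - 1) / a) ^ m := by
  set Y : ℕ → Ω → ℝ := fun j ω => (X j ω : ℝ) with hY
  have hYmeas : ∀ j, Measurable (Y j) := fun j => measurable_from_top.comp (hmeas j)
  have hindepY : iIndepFun Y P :=
    hindep.comp (fun _ => ((↑) : ℕ → ℝ)) (fun _ => measurable_from_top)
  have hsum : (fun ω => ∑ j ∈ Finset.Icc 1 m, (X j ω : ℝ)) = ∑ j ∈ Finset.Icc 1 m, Y j := by
    funext ω; simp [hY]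
  have hone : ∀ j, mgf (Y j) P t = 1 + (Real.exp t - 1) / a := by
    intro j
    have hs : MeasurableSet {ω | X j ω = 1} := hmeas j (measurableSet_singleton 1)
    have hind : Y j = Set.indicator {ω | X j ω = 1} (fun _ => (1 : ℝ)) := by
      funext ω
      rcases h01 j ω with h | h <;>
        simp [hY, h, Set.indicator_apply, Set.mem_setOf_eq]
    have hint : Integrable (Y j) P := by
      rw [hind]; exact (integrable_const (1 : ℝ)).indicator hs
    have hEY : ∫ ω, Y j ω ∂P = 1 / a := by
      rw [hind, integral_indicator_const (1 : ℝ) hs, Measure.real, hBer j, smul_eq_mul, mul_one,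
        ENNReal.toReal_ofReal (by positivity)]
    have hptw : ∀ ω, Real.exp (t * Y j ω) = 1 + (Real.exp t - 1) * Y j ω := by
      intro ω
      rcases h01 j ω with h | h <;> simp [hY, h] <;> ring
    calc mgf (Y j) P t = ∫ ω, (1 + (Real.exp t - 1) * Y j ω) ∂P := by
          rw [mgf]; exact integral_congr_ae (ae_of_all _ hptw)
      _ = 1 + (Real.exp t - 1) / a := by
          rw [integral_add (integrable_const 1) (hint.const_mul _), integral_const,
            MeasureTheory.integral_const_mul, hEY]
          simp [mul_one_div, div_eq_mul_inv]
  rw [hsum, hindepY.mgf_sum hYmeas]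
  rw [Finset.prod_congr rfl fun j _ => hone j, Finset.prod_const, Nat.card_Icc]
  simp
lemma ineq_up {β : ℝ} (hβ0 : 0 < β) (hβ1 : β < 1) :
    (1 - β) * (Real.exp β - 1) - β ≤ -β ^ 2 / 6 := by
  have h := Real.exp_bound' hβ0.le hβ1.le (n := 2) (by norm_num)
  simp [Finset.sum_range_succ] at h
  nlinarith [sq_nonneg β, pow_pos hβ0 3]

lemma cubic_le_exp {β : ℝ} (hβ0 : 0 < β) :
    1 + β + β ^ 2 / 2 + β ^ 3 / 6 ≤ Real.exp β := by
  have h := Real.sum_le_exp_of_nonneg hβ0.le 4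
  simp [Finset.sum_range_succ, Nat.factorial] at h
  linarith

lemma ineq_down {β : ℝ} (hβ0 : 0 < β) (hβ1 : β < 1) :
    (1 + β) * (Real.exp (-β) - 1) + β ≤ -β ^ 2 / 6 := by
  set Q : ℝ := 1 + β + β ^ 2 / 2 + β ^ 3 / 6 with hQdef
  have hQ : 0 < Q := by positivity
  have hQle : Q ≤ Real.exp β := cubic_le_exp hβ0
  have hE : Real.exp (-β) ≤ 1 / Q := by
    rw [Real.exp_neg, one_div]
    exact inv_anti₀ hQ hQle
  have h1 : (1 + β) * (Real.exp (-β) - 1) ≤ (1 + β) * (1 / Q - 1) := by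
    have : 0 < 1 + β := by linarith
    nlinarith
  have key : (1 + β) * (1 / Q - 1) + β + β ^ 2 / 6
      = (-(1/3) * β ^ 2 + β ^ 4 / 12 + β ^ 5 / 36) / Q := by
    field_simp
    ring
  have hnum : -(1/3) * β ^ 2 + β ^ 4 / 12 + β ^ 5 / 36 ≤ 0 := by
    nlinarith [sq_nonneg β, sq_nonneg (β^2), pow_pos hβ0 2, pow_pos hβ0 3]
  have h2 : (1 + β) * (1 / Q - 1) + β + β ^ 2 / 6 ≤ 0 := by
    rw [key]
    exact div_nonpos_of_nonpos_of_nonneg hnum hQ.le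
  linarith

section helpers
variable {Ω : Type*} [MeasurableSpace Ω] (P : Measure Ω) [IsProbabilityMeasure P]
  {a : ℝ} (X : ℕ → Ω → ℕ)

lemma stmt17_tail_up (ha0 : 0 < a) (hmeas : ∀ j, Measurable (X j))
    (h01 : ∀ j, ∀ ω, X j ω = 0 ∨ X j ω = 1)
    (hBer : ∀ j, P {ω | X j ω = 1} = ENNReal.ofReal (1 / a))
    (hindep : iIndepFun X P)
    (m : ℕ) (t ε : ℝ) (ht : 0 ≤ t) :
    (P {ω | ε ≤ ∑ j ∈ Finset.Icc 1 m, (X j ω : ℝ)}).toReal ≤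
      Real.exp (-t * ε) * (1 + (Real.exp t - 1) / a) ^ m := by
  have := measure_ge_le_exp_mul_mgf (μ := P)
    (X := fun ω => ∑ j ∈ Finset.Icc 1 m, (X j ω : ℝ)) ε ht
    (int_exp_sum P X hmeas h01 m t)
  rwa [mgf_bern_sum P ha0 X hmeas h01 hBer hindep m t] at this

lemma stmt17_tail_down (ha0 : 0 < a) (hmeas : ∀ j, Measurable (X j))
    (h01 : ∀ j, ∀ ω, X j ω = 0 ∨ X j ω = 1)
    (hBer : ∀ j, P {ω | X j ω = 1} = ENNReal.ofReal (1 / a))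
    (hindep : iIndepFun X P)
    (m : ℕ) (t ε : ℝ) (ht : t ≤ 0) :
    (P {ω | (∑ j ∈ Finset.Icc 1 m, (X j ω : ℝ)) ≤ ε}).toReal ≤
      Real.exp (-t * ε) * (1 + (Real.exp t - 1) / a) ^ m := by
  have := measure_le_le_exp_mul_mgf (μ := P)
    (X := fun ω => ∑ j ∈ Finset.Icc 1 m, (X j ω : ℝ)) ε ht
    (int_exp_sum P X hmeas h01 m t)
  rwa [mgf_bern_sum P ha0 X hmeas h01 hBer hindep m t] at this

end helpers

set_option maxHeartbeats 1000000 in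
/-- concentration of the rank of a sampled element: let `n ≥ 3`,
`0 < δ < ln n`, `0 < β < 1`, `1 ≤ z(1-β)`, `z(1+β) ≤ n`, `L = ln((ln n)/δ)`,
`a = β²·z/(6L) ≥ 1`. If `X 1, …, X n` are independent `{0,1}`-valued random
variables, each equal to `1` with probability `1/a`, and `S m = ∑_{j=1}^m X j`,
then with probability at least `1 - 4δ/ln n`, both `S ⌊z(1-β)⌋ < z/a` and
`S ⌈z(1+β)⌉ ≥ z/a` hold (i.e. the rank `R` of the `⌈z/a⌉`-th kept element
satisfies `z(1-β) < R ≤ z(1+β)`). -/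
theorem stmt17 {Ω : Type*} [MeasurableSpace Ω] (P : Measure Ω)
    [IsProbabilityMeasure P]
    (n : ℕ) (δ β z L a : ℝ)
    (hn : 3 ≤ n) (hδ0 : 0 < δ) (hδ1 : δ < Real.log n)
    (hβ0 : 0 < β) (hβ1 : β < 1)
    (hz1 : 1 ≤ z * (1 - β)) (hz2 : z * (1 + β) ≤ (n : ℝ))
    (hL : L = Real.log (Real.log n / δ))
    (ha : a = β ^ 2 * z / (6 * L)) (ha1 : 1 ≤ a)
    (X : ℕ → Ω → ℕ)
    (hmeas : ∀ j, Measurable (X j))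
    (h01 : ∀ j, ∀ ω, X j ω = 0 ∨ X j ω = 1)
    (hBer : ∀ j, P {ω | X j ω = 1} = ENNReal.ofReal (1 / a))
    (hindep : iIndepFun X P) :
    ENNReal.ofReal (1 - 4 * δ / Real.log n) ≤
      P {ω | (∑ j ∈ Finset.Icc 1 ⌊z * (1 - β)⌋₊, (X j ω : ℝ)) < z / a ∧
             z / a ≤ ∑ j ∈ Finset.Icc 1 ⌈z * (1 + β)⌉₊, (X j ω : ℝ)} := by
  have hlogn : 0 < Real.log n := hδ0.trans hδ1
  have hL0 : 0 < L := by
    rw [hL]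
    exact Real.log_pos ((one_lt_div hδ0).2 hδ1)
  have ha0 : 0 < a := lt_of_lt_of_le one_pos ha1
  have hz0 : 0 < z := by nlinarith
  have hkey : z / a = 6 * L / β ^ 2 := by
    rw [ha, div_div_eq_mul_div, mul_comm z (6 * L)]
    exact mul_div_mul_right _ _ hz0.ne'
  have hexpL : Real.exp (-L) = δ / Real.log n := by
    rw [Real.exp_neg, hL, Real.exp_log (by positivity), inv_div]
  have hLbound : Real.exp (-(z / a) * (β ^ 2 / 6)) = δ / Real.log n := by
    rw [← hexpL]
    congr 1
    rw [hkey]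
    field_simp
  set m₁ := ⌊z * (1 - β)⌋₊ with hm₁
  set m₂ := ⌈z * (1 + β)⌉₊ with hm₂
  have hm₁le : (m₁ : ℝ) ≤ z * (1 - β) := Nat.floor_le (by linarith)
  have hm₂ge : z * (1 + β) ≤ (m₂ : ℝ) := Nat.le_ceil _
  -- upper tail bound for S m₁
  have hbad1 : (P {ω | z / a ≤ ∑ j ∈ Finset.Icc 1 m₁, (X j ω : ℝ)}).toReal ≤
      δ / Real.log n := by
    refine le_trans (stmt17_tail_up P X ha0 hmeas h01 hBer hindep m₁ β (z/a) hβ0.le) ?_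
    rw [← hLbound]
    have hx : 0 ≤ (Real.exp β - 1) / a := by
      have h1e : 1 ≤ Real.exp β := Real.one_le_exp hβ0.le
      exact div_nonneg (by linarith) ha0.le
    calc Real.exp (-β * (z / a)) * (1 + (Real.exp β - 1) / a) ^ m₁
        ≤ Real.exp (-β * (z / a)) * Real.exp ((Real.exp β - 1) / a * m₁) := by
          apply mul_le_mul_of_nonneg_left _ (Real.exp_nonneg _)
          calc (1 + (Real.exp β - 1) / a) ^ m₁
              ≤ (Real.exp ((Real.exp β - 1) / a)) ^ m₁ :=
                pow_le_pow_left₀ (by linarith)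
                  (by linarith [Real.add_one_le_exp ((Real.exp β - 1) / a)]) _
            _ = Real.exp ((Real.exp β - 1) / a * m₁) := by
                rw [← Real.exp_nat_mul]; ring_nf
      _ = Real.exp (-β * (z / a) + (Real.exp β - 1) / a * m₁) := (Real.exp_add _ _).symm
      _ ≤ Real.exp (-(z / a) * (β ^ 2 / 6)) := by
          apply Real.exp_le_exp.2
          have h1 : (Real.exp β - 1) / a * m₁ ≤ (Real.exp β - 1) / a * (z * (1 - β)) :=
            mul_le_mul_of_nonneg_left hm₁le hx
          have h2 := ineq_up hβ0 hβ1
          have hza : 0 < z / a := by positivity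
          have : -β * (z / a) + (Real.exp β - 1) / a * (z * (1 - β))
              = (z / a) * ((1 - β) * (Real.exp β - 1) - β) := by field_simp; ring
          nlinarith [mul_le_mul_of_nonneg_left h2 hza.le]
  -- lower tail bound for S m₂
  have hbad2 : (P {ω | (∑ j ∈ Finset.Icc 1 m₂, (X j ω : ℝ)) ≤ z / a}).toReal ≤
      δ / Real.log n := by
    refine le_trans (stmt17_tail_down P X ha0 hmeas h01 hBer hindep m₂ (-β) (z/a)
      (by linarith)) ?_
    rw [← hLbound]
    have hE1 : Real.exp (-β) ≤ 1 := Real.exp_le_one_iff.2 (by linarith)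
    have hE0 : 0 < Real.exp (-β) := Real.exp_pos _
    have hx0 : (Real.exp (-β) - 1) / a ≤ 0 := by
      apply div_nonpos_of_nonpos_of_nonneg (by linarith) ha0.le
    have hx1 : 0 ≤ 1 + (Real.exp (-β) - 1) / a := by
      have : -1 ≤ (Real.exp (-β) - 1) / a := by
        rw [le_div_iff₀ ha0]
        nlinarith
      linarith
    calc Real.exp (-(-β) * (z / a)) * (1 + (Real.exp (-β) - 1) / a) ^ m₂
        ≤ Real.exp (β * (z / a)) * Real.exp ((Real.exp (-β) - 1) / a * m₂) := by
          rw [neg_neg]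
          apply mul_le_mul_of_nonneg_left _ (Real.exp_nonneg _)
          calc (1 + (Real.exp (-β) - 1) / a) ^ m₂
              ≤ (Real.exp ((Real.exp (-β) - 1) / a)) ^ m₂ :=
                pow_le_pow_left₀ hx1 (by linarith [Real.add_one_le_exp ((Real.exp (-β) - 1) / a)]) _
            _ = Real.exp ((Real.exp (-β) - 1) / a * m₂) := by
                rw [← Real.exp_nat_mul]; ring_nf
      _ = Real.exp (β * (z / a) + (Real.exp (-β) - 1) / a * m₂) := (Real.exp_add _ _).symm
      _ ≤ Real.exp (-(z / a) * (β ^ 2 / 6)) := by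
          apply Real.exp_le_exp.2
          have h1 : (Real.exp (-β) - 1) / a * m₂ ≤ (Real.exp (-β) - 1) / a * (z * (1 + β)) :=
            mul_le_mul_of_nonpos_left hm₂ge hx0
          have h2 := ineq_down hβ0 hβ1
          have hza : 0 < z / a := by positivity
          have : β * (z / a) + (Real.exp (-β) - 1) / a * (z * (1 + β))
              = (z / a) * ((1 + β) * (Real.exp (-β) - 1) + β) := by field_simp; ring
          nlinarith [mul_le_mul_of_nonneg_left h2 hza.le]
  -- assemble
  have hS1meas : Measurable (fun ω => ∑ j ∈ Finset.Icc 1 m₁, (X j ω : ℝ)) :=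
    Finset.measurable_sum _ fun j _ => measurable_from_top.comp (hmeas j)
  have hS2meas : Measurable (fun ω => ∑ j ∈ Finset.Icc 1 m₂, (X j ω : ℝ)) :=
    Finset.measurable_sum _ fun j _ => measurable_from_top.comp (hmeas j)
  set G := {ω | (∑ j ∈ Finset.Icc 1 m₁, (X j ω : ℝ)) < z / a ∧
      z / a ≤ ∑ j ∈ Finset.Icc 1 m₂, (X j ω : ℝ)} with hGdef
  have hG : MeasurableSet G :=
    (measurableSet_lt hS1meas measurable_const).inter
      (measurableSet_le measurable_const hS2meas)
  have hcompl : P Gᶜ ≤ ENNReal.ofReal (2 * (δ / Real.log n)) := by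
    have hsub : Gᶜ ⊆ {ω | z / a ≤ ∑ j ∈ Finset.Icc 1 m₁, (X j ω : ℝ)} ∪
        {ω | (∑ j ∈ Finset.Icc 1 m₂, (X j ω : ℝ)) ≤ z / a} := by
      intro ω hω
      simp only [hGdef, Set.mem_compl_iff, Set.mem_setOf_eq, not_and_or, not_lt, not_le] at hω
      rcases hω with h | h
      · exact Or.inl h
      · exact Or.inr h.le
    calc P Gᶜ ≤ P ({ω | z / a ≤ ∑ j ∈ Finset.Icc 1 m₁, (X j ω : ℝ)} ∪
          {ω | (∑ j ∈ Finset.Icc 1 m₂, (X j ω : ℝ)) ≤ z / a}) := measure_mono hsub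
      _ ≤ P {ω | z / a ≤ ∑ j ∈ Finset.Icc 1 m₁, (X j ω : ℝ)} +
          P {ω | (∑ j ∈ Finset.Icc 1 m₂, (X j ω : ℝ)) ≤ z / a} := measure_union_le _ _
      _ ≤ ENNReal.ofReal (δ / Real.log n) + ENNReal.ofReal (δ / Real.log n) := by
          gcongr
          · rw [← ENNReal.ofReal_toReal (measure_ne_top P _)]
            exact ENNReal.ofReal_le_ofReal hbad1
          · rw [← ENNReal.ofReal_toReal (measure_ne_top P _)]
            exact ENNReal.ofReal_le_ofReal hbad2
      _ = ENNReal.ofReal (2 * (δ / Real.log n)) := by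
          rw [← ENNReal.ofReal_add (by positivity) (by positivity)]
          ring_nf
  calc ENNReal.ofReal (1 - 4 * δ / Real.log n)
      ≤ ENNReal.ofReal (1 - 2 * (δ / Real.log n)) := by
        apply ENNReal.ofReal_le_ofReal
        have hd : 0 ≤ δ / Real.log n := by positivity
        rw [mul_div_assoc]
        linarith
    _ = 1 - ENNReal.ofReal (2 * (δ / Real.log n)) := by
        rw [ENNReal.ofReal_sub _ (by positivity), ENNReal.ofReal_one]
    _ ≤ 1 - P Gᶜ := tsub_le_tsub_left hcompl 1
    _ = P G := by
        rw [prob_compl_eq_one_sub hG, ENNReal.sub_sub_cancel ENNReal.one_ne_top prob_le_one]
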